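/- Let p ∈ (1,∞) with Hölder conjugate q, let s : {1,2,...} → ℕ satisfy s_k ≥ 1, and let σ : {1,2,...} → ℝ satisfy σ_k > 0. If Σ_{k≥1} (σ_k s_k)^{-q/p} converges, then M_p(σ,s) = (Σ_{k≥1} (σ_k s_k)^{-q/p})^{-p/q}; if Σ_{k≥1} (σ_k s_k)^{-q/p} diverges, then M_p(σ,s) = 0. -/

import Mathlib

open scoped ENNReal NNReal

open MeasureTheory Filter Topology

/-- The radially symmetric `p`-modulus `M_p(σ, s)` of the family of infinite
descending paths in a radially symmetric infinite tree whose `k`-th shell has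
`s k` edges, each of weight `σ k`: the infimum of the `p`-energies
`Σ_k s_k σ_k ρ_k^p` over all densities `ρ` with `Σ_k ρ_k ≥ 1`. -/
noncomputable def Mmod (p : ℝ) (σ : ℕ → ℝ≥0) (s : ℕ → ℕ) : ℝ≥0∞ :=
  ⨅ ρ ∈ {ρ : ℕ → ℝ≥0 | 1 ≤ ∑' k : ℕ, (ρ k : ℝ≥0∞)},
    ∑' k : ℕ, (s k : ℝ≥0∞) * (σ k : ℝ≥0∞) * (ρ k : ℝ≥0∞) ^ p

/-- series formula for the radially symmetric `p`-modulus. -/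
theorem stmt4 (p q : ℝ) (hp : 1 < p) (hq : 1 / p + 1 / q = 1)
    (s : ℕ → ℕ) (hs : ∀ k, 1 ≤ s k) (σ : ℕ → ℝ≥0) (hσ : ∀ k, 0 < σ k) :
    ((∑' k : ℕ, ((σ k : ℝ≥0∞) * (s k : ℝ≥0∞)) ^ (-(q / p))) ≠ ⊤ →
      Mmod p σ s =
        (∑' k : ℕ, ((σ k : ℝ≥0∞) * (s k : ℝ≥0∞)) ^ (-(q / p))) ^ (-(p / q))) ∧
    ((∑' k : ℕ, ((σ k : ℝ≥0∞) * (s k : ℝ≥0∞)) ^ (-(q / p))) = ⊤ →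
      Mmod p σ s = 0) := by
  have hpq : p.HolderConjugate q := Real.holderConjugate_iff.mpr ⟨hp, by simpa [one_div] using hq⟩
  have hp0 : (0:ℝ) < p := hpq.pos
  have hq0 : (0:ℝ) < q := hpq.symm.pos
  have hpq1 : p / q = p - 1 := hpq.div_conj_eq_sub_one
  have hqp1 : q / p = q - 1 := hpq.symm.div_conj_eq_sub_one
  set A : ℕ → ℝ≥0∞ := fun k => (σ k : ℝ≥0∞) * (s k : ℝ≥0∞) with hA
  set w : ℕ → ℝ≥0∞ := fun k => A k ^ (-(q / p)) with hwdef
  have hA0 : ∀ k, A k ≠ 0 := fun k =>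
    mul_ne_zero (by exact_mod_cast (hσ k).ne')
      (by exact_mod_cast Nat.cast_ne_zero.mpr (Nat.one_le_iff_ne_zero.mp (hs k)))
  have hAtop : ∀ k, A k ≠ ⊤ := by
    intro k
    simp [hA, ENNReal.mul_ne_top, ENNReal.coe_ne_top, ENNReal.natCast_ne_top]
  have hw0 : ∀ k, w k ≠ 0 := by
    intro k
    simp [hwdef, ENNReal.rpow_eq_zero_iff, hA0 k, hAtop k]
  have hwtop : ∀ k, w k ≠ ⊤ := by
    intro k
    simp [hwdef, ENNReal.rpow_eq_top_iff, hA0 k, hAtop k]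
  have hAw : ∀ k, A k * w k ^ p = w k := by
    intro k
    rw [hwdef]
    rw [← ENNReal.rpow_mul]
    have h1 : -(q / p) * p = -q := by field_simp
    rw [h1]
    nth_rewrite 1 [show A k = A k ^ (1:ℝ) by rw [ENNReal.rpow_one]]
    rw [← ENNReal.rpow_add _ _ (hA0 k) (hAtop k)]
    congr 1
    rw [hqp1]; ring
  -- upper bound through truncations
  have key : ∀ N : ℕ, (∑ k ∈ Finset.range N, w k) ≠ 0 →
      Mmod p σ s ≤ (∑ k ∈ Finset.range N, w k) ^ (1 - p) := by
    intro N hT0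
    set T : ℝ≥0∞ := ∑ k ∈ Finset.range N, w k with hTdef
    have hTtop : T ≠ ⊤ := by
      refine (ENNReal.sum_lt_top.2 fun k _ => ?_).ne
      exact (hwtop k).lt_top
    set ρ : ℕ → ℝ≥0 := fun k => if k < N then (w k / T).toNNReal else 0 with hρ
    have hcoe : ∀ k, (ρ k : ℝ≥0∞) = if k < N then w k / T else 0 := by
      intro k
      by_cases h : k < N
      · simp only [hρ, h, if_true]
        exact ENNReal.coe_toNNReal (by simp [ENNReal.div_eq_top, hT0, hwtop k])
      · simp [hρ, h]
    have hsum : ∑' k, (ρ k : ℝ≥0∞) = 1 := by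
      have : ∑' k, (ρ k : ℝ≥0∞) = ∑ k ∈ Finset.range N, w k / T := by
        rw [tsum_eq_sum (s := Finset.range N) (fun k hk => by
          simp [hcoe k, Finset.mem_range.not.mp hk])]
        exact Finset.sum_congr rfl fun k hk => by
          simp [hcoe k, Finset.mem_range.mp hk]
      rw [this]
      simp_rw [div_eq_mul_inv, ← Finset.sum_mul]
      exact ENNReal.mul_inv_cancel hT0 hTtop
    have hmem : ρ ∈ {ρ : ℕ → ℝ≥0 | 1 ≤ ∑' k : ℕ, (ρ k : ℝ≥0∞)} := by
      simp [Set.mem_setOf_eq, hsum]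
    have hE : (∑' k, (s k : ℝ≥0∞) * (σ k : ℝ≥0∞) * (ρ k : ℝ≥0∞) ^ p) = T ^ (1 - p) := by
      have hterm : ∀ k ∈ Finset.range N,
          (s k : ℝ≥0∞) * (σ k : ℝ≥0∞) * (ρ k : ℝ≥0∞) ^ p = w k * (T ^ p)⁻¹ := by
        intro k hk
        rw [hcoe k, if_pos (Finset.mem_range.mp hk), div_eq_mul_inv,
          ENNReal.mul_rpow_of_nonneg _ _ hp0.le, ENNReal.inv_rpow,
          show (s k : ℝ≥0∞) * (σ k : ℝ≥0∞) = A k by rw [hA, mul_comm], ← mul_assoc, hAw k]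
      rw [tsum_eq_sum (s := Finset.range N) (fun k hk => by
        simp [hcoe k, Finset.mem_range.not.mp hk, ENNReal.zero_rpow_of_pos hp0]),
        Finset.sum_congr rfl hterm, ← Finset.sum_mul, ← hTdef]
      have : T ^ (1 - p) = T * (T ^ p)⁻¹ := by
        rw [show (1:ℝ) - p = 1 + -p by ring, ENNReal.rpow_add _ _ hT0 hTtop,
          ENNReal.rpow_one, ENNReal.rpow_neg]
      exact this.symm
    calc Mmod p σ s ≤ ∑' k, (s k : ℝ≥0∞) * (σ k : ℝ≥0∞) * (ρ k : ℝ≥0∞) ^ p :=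
          iInf₂_le ρ hmem
      _ = T ^ (1 - p) := hE
  have hS0 : (∑' k, w k) ≠ 0 := fun h =>
    hw0 0 (le_antisymm (h ▸ ENNReal.le_tsum 0) zero_le)
  -- uniform upper bound
  have upper : Mmod p σ s ≤ (∑' k, w k) ^ (1 - p) := by
    have htend : Tendsto (fun N => (∑ k ∈ Finset.range N, w k) ^ (1 - p)) atTop
        (𝓝 ((∑' k, w k) ^ (1 - p))) :=
      (ENNReal.continuous_rpow_const.tendsto _).comp (ENNReal.tendsto_nat_tsum w)
    refine ge_of_tendsto htend ?_
    filter_upwards [eventually_ge_atTop 1] with N hN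
    refine key N ?_
    have : w 0 ≤ ∑ k ∈ Finset.range N, w k :=
      Finset.single_le_sum (fun k _ => zero_le) (Finset.mem_range.mpr hN)
    exact fun h => hw0 0 (le_antisymm (h ▸ this) zero_le)
  constructor
  · intro hS
    have hmp : -(p / q) = 1 - p := by rw [hpq1]; ring
    rw [hmp]
    refine le_antisymm upper (le_iInf₂ fun ρ hρ => ?_)
    -- lower bound via Hölder
    set S : ℝ≥0∞ := ∑' k, w k with hSdef
    set E : ℝ≥0∞ := ∑' k, (s k : ℝ≥0∞) * (σ k : ℝ≥0∞) * (ρ k : ℝ≥0∞) ^ p with hEdef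
    set f : ℕ → ℝ≥0∞ := fun k => A k ^ (1 / p) * (ρ k : ℝ≥0∞) with hf
    set g : ℕ → ℝ≥0∞ := fun k => A k ^ (-(1 / p)) with hg
    have hH := ENNReal.lintegral_mul_le_Lp_mul_Lq (Measure.count (α := ℕ)) hpq
      (measurable_from_nat (f := f)).aemeasurable (measurable_from_nat (f := g)).aemeasurable
    rw [lintegral_count, lintegral_count, lintegral_count] at hH
    have h1 : ∑' k, (f * g) k = ∑' k, (ρ k : ℝ≥0∞) := by
      refine tsum_congr fun k => ?_
      simp only [Pi.mul_apply, hf, hg]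
      rw [mul_right_comm, ← ENNReal.rpow_add _ _ (hA0 k) (hAtop k)]
      simp
    have h2 : ∑' k, f k ^ p = E := by
      rw [hEdef]
      refine tsum_congr fun k => ?_
      rw [hf]
      simp only
      rw [ENNReal.mul_rpow_of_nonneg _ _ hp0.le, ← ENNReal.rpow_mul,
        one_div_mul_cancel hp0.ne', ENNReal.rpow_one,
        show (s k : ℝ≥0∞) * (σ k : ℝ≥0∞) = A k by rw [hA, mul_comm]]
    have h3 : ∑' k, g k ^ q = S := by
      rw [hSdef]
      refine tsum_congr fun k => ?_
      rw [hg, hwdef]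
      simp only
      rw [← ENNReal.rpow_mul]
      congr 1
      field_simp
    rw [h1, h2, h3] at hH
    have hone : (1 : ℝ≥0∞) ≤ E ^ (1 / p) * S ^ (1 / q) := le_trans hρ hH
    have hSq0 : S ^ (1 / q) ≠ 0 := by
      simp [ENNReal.rpow_eq_zero_iff, hS0, hS]
    have hSqtop : S ^ (1 / q) ≠ ⊤ := by
      simp [ENNReal.rpow_eq_top_iff, hS0, hS]
    have h4 : (S ^ (1 / q))⁻¹ ≤ E ^ (1 / p) := by
      calc (S ^ (1 / q))⁻¹ = 1 * (S ^ (1 / q))⁻¹ := (one_mul _).symm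
        _ ≤ E ^ (1 / p) * S ^ (1 / q) * (S ^ (1 / q))⁻¹ := mul_le_mul_left hone _
        _ = E ^ (1 / p) * (S ^ (1 / q) * (S ^ (1 / q))⁻¹) := mul_assoc _ _ _
        _ = E ^ (1 / p) := by rw [ENNReal.mul_inv_cancel hSq0 hSqtop, mul_one]
    have h5 : ((S ^ (1 / q))⁻¹) ^ p ≤ (E ^ (1 / p)) ^ p :=
      ENNReal.rpow_le_rpow h4 hp0.le
    rw [← ENNReal.rpow_neg, ← ENNReal.rpow_mul, ← ENNReal.rpow_mul,
      one_div_mul_cancel hp0.ne', ENNReal.rpow_one] at h5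
    have h6 : -(1 / q) * p = 1 - p := by
      have h7 : (1 / q) * p = p / q := by ring
      rw [neg_mul, h7, hpq1]; ring
    rwa [h6] at h5
  · intro hS
    refine le_antisymm ?_ zero_le
    calc Mmod p σ s ≤ (∑' k, w k) ^ (1 - p) := upper
      _ = 0 := by rw [hS]; exact ENNReal.top_rpow_of_neg (by linarith)
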